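/- For any series–parallel term s and poset with boxes P: P satisfies the formula φ(s) under the isomorphism semantics iff P ≅ ⟦s⟧; under the upward semantics iff P ⊒ ⟦s⟧; and under the downward semantics iff P ⊑ ⟦s⟧; where φ(a)=a, φ(1)=I, φ([t])=[φ(t)], φ(t·u)=φ(t)▷φ(u), φ(t∥u)=φ(t)∗φ(u). -/

import Mathlib

/-- A poset with boxes over an alphabet `A`. -/
structure PB (A : Type) : Type 1 where
  Ev : Type
  le : Ev → Ev → Prop
  le_refl : ∀ e, le e e
  le_trans : ∀ e f g, le e f → le f g → le e g
  le_antisymm : ∀ e f, le e f → le f e → e = f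
  lab : Ev → A
  boxes : Set (Set Ev)
  boxes_ne : ∀ B ∈ boxes, B.Nonempty

/-- A homomorphism of posets with boxes: a bijection preserving labels,
order and boxes. -/
structure Hom {A : Type} (P Q : PB A) where
  toFun : P.Ev → Q.Ev
  bij : Function.Bijective toFun
  lab_eq : ∀ e, Q.lab (toFun e) = P.lab e
  mono : ∀ e f, P.le e f → Q.le (toFun e) (toFun f)
  box_pres : ∀ B ∈ P.boxes, toFun '' B ∈ Q.boxes

/-- Order-reflecting homomorphism. -/
def Hom.OrdRefl {A : Type} {P Q : PB A} (φ : Hom P Q) : Prop :=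
  ∀ e f, Q.le (φ.toFun e) (φ.toFun f) → P.le e f

/-- Box-reflecting homomorphism. -/
def Hom.BoxRefl {A : Type} {P Q : PB A} (φ : Hom P Q) : Prop :=
  ∀ B : Set P.Ev, φ.toFun '' B ∈ Q.boxes → B ∈ P.boxes

/-- Isomorphism of posets with boxes. -/
def Iso {A : Type} (P Q : PB A) : Prop :=
  ∃ φ : Hom P Q, φ.OrdRefl ∧ φ.BoxRefl

/-- `Subsume P Q` means `P ⊑ Q` : there is a homomorphism from `Q` to `P`. -/
def Subsume {A : Type} (P Q : PB A) : Prop := Nonempty (Hom Q P)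

/-- The empty poset with boxes. -/
def onePB (A : Type) : PB A where
  Ev := PEmpty
  le := fun _ _ => True
  le_refl := fun e => trivial
  le_trans := fun _ _ _ _ _ => trivial
  le_antisymm := fun e => e.elim
  lab := fun e => e.elim
  boxes := ∅
  boxes_ne := fun _ h => absurd h (Set.notMem_empty _)

/-- The atomic poset with boxes, with a single event labelled `a`. -/
def atomPB {A : Type} (a : A) : PB A where
  Ev := PUnit
  le := fun _ _ => True
  le_refl := fun _ => trivial
  le_trans := fun _ _ _ _ _ => trivial
  le_antisymm := fun _ _ _ _ => rfl
  lab := fun _ => a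
  boxes := ∅
  boxes_ne := fun _ h => absurd h (Set.notMem_empty _)

/-- The order of a sequential composition on the disjoint union of events. -/
def seqLE {A : Type} (P Q : PB A) : P.Ev ⊕ Q.Ev → P.Ev ⊕ Q.Ev → Prop
  | .inl a, .inl b => P.le a b
  | .inr a, .inr b => Q.le a b
  | .inl _, .inr _ => True
  | .inr _, .inl _ => False

/-- Sequential composition of posets with boxes. -/
def seqPB {A : Type} (P Q : PB A) : PB A where
  Ev := P.Ev ⊕ Q.Ev
  le := seqLE P Q
  le_refl := fun e => by cases e <;> simp [seqLE, PB.le_refl]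
  le_trans := fun e f g hef hfg => by
    cases e <;> cases f <;> cases g <;>
      simp_all [seqLE] <;>
      first
        | exact P.le_trans _ _ _ hef hfg
        | exact Q.le_trans _ _ _ hef hfg
  le_antisymm := fun e f hef hfe => by
    cases e <;> cases f <;> simp_all [seqLE]
    · exact P.le_antisymm _ _ hef hfe
    · exact Q.le_antisymm _ _ hef hfe
  lab := Sum.elim P.lab Q.lab
  boxes := (Set.image Sum.inl '' P.boxes) ∪ (Set.image Sum.inr '' Q.boxes)
  boxes_ne := by
    rintro B (⟨C, hC, rfl⟩ | ⟨C, hC, rfl⟩)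
    · exact ((P.boxes_ne C hC).image _)
    · exact ((Q.boxes_ne C hC).image _)

/-- The order of a parallel composition on the disjoint union of events. -/
def parLE {A : Type} (P Q : PB A) : P.Ev ⊕ Q.Ev → P.Ev ⊕ Q.Ev → Prop
  | .inl a, .inl b => P.le a b
  | .inr a, .inr b => Q.le a b
  | .inl _, .inr _ => False
  | .inr _, .inl _ => False

/-- Parallel composition of posets with boxes. -/
def parPB {A : Type} (P Q : PB A) : PB A where
  Ev := P.Ev ⊕ Q.Ev
  le := parLE P Q
  le_refl := fun e => by cases e <;> simp [parLE, PB.le_refl]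
  le_trans := fun e f g hef hfg => by
    cases e <;> cases f <;> cases g <;>
      simp_all [parLE] <;>
      first
        | exact P.le_trans _ _ _ hef hfg
        | exact Q.le_trans _ _ _ hef hfg
  le_antisymm := fun e f hef hfe => by
    cases e <;> cases f <;> simp_all [parLE]
    · exact P.le_antisymm _ _ hef hfe
    · exact Q.le_antisymm _ _ hef hfe
  lab := Sum.elim P.lab Q.lab
  boxes := (Set.image Sum.inl '' P.boxes) ∪ (Set.image Sum.inr '' Q.boxes)
  boxes_ne := by
    rintro B (⟨C, hC, rfl⟩ | ⟨C, hC, rfl⟩)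
    · exact ((P.boxes_ne C hC).image _)
    · exact ((Q.boxes_ne C hC).image _)

/-- Boxing: add the full (nonempty) set of events as a box. -/
def boxPB {A : Type} (P : PB A) : PB A where
  Ev := P.Ev
  le := P.le
  le_refl := P.le_refl
  le_trans := P.le_trans
  le_antisymm := P.le_antisymm
  lab := P.lab
  boxes := P.boxes ∪ {B | B = Set.univ ∧ B.Nonempty}
  boxes_ne := by
    rintro B (hB | ⟨rfl, hne⟩)
    · exact P.boxes_ne B hB
    · exact hne

/-- Restriction of a poset with boxes to a subset of its events. -/
def restrictPB {A : Type} (P : PB A) (S : Set P.Ev) : PB A where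
  Ev := S
  le := fun x y => P.le x.1 y.1
  le_refl := fun x => P.le_refl x.1
  le_trans := fun x y z => P.le_trans x.1 y.1 z.1
  le_antisymm := fun x y h h' => Subtype.ext (P.le_antisymm _ _ h h')
  lab := fun x => P.lab x.1
  boxes := {B | Subtype.val '' B ∈ P.boxes}
  boxes_ne := fun B hB => by
    rcases P.boxes_ne _ hB with ⟨x, ⟨y, hy, rfl⟩⟩
    exact ⟨y, hy⟩

/-- Forbidden pattern P1 (the `N` pattern). -/
def hasP1 {A : Type} (P : PB A) : Prop :=
  ∃ e1 e2 e3 e4 : P.Ev,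
    P.le e1 e3 ∧ P.le e2 e3 ∧ P.le e2 e4 ∧
    ¬ P.le e1 e4 ∧ ¬ P.le e2 e1 ∧ ¬ P.le e4 e3

/-- Forbidden pattern P2 (overlapping non-nested boxes). -/
def hasP2 {A : Type} (P : PB A) : Prop :=
  ∃ (Bx Cx : Set P.Ev) (e1 e2 e3 : P.Ev),
    Bx ∈ P.boxes ∧ Cx ∈ P.boxes ∧
    e1 ∈ Bx \ Cx ∧ e2 ∈ Bx ∩ Cx ∧ e3 ∈ Cx \ Bx

/-- Forbidden pattern P3. -/
def hasP3 {A : Type} (P : PB A) : Prop :=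
  ∃ (Bx : Set P.Ev) (e1 e2 e3 : P.Ev),
    Bx ∈ P.boxes ∧ e1 ∉ Bx ∧ e2 ∈ Bx ∧ e3 ∈ Bx ∧
    P.le e1 e2 ∧ ¬ P.le e1 e3

/-- Forbidden pattern P4. -/
def hasP4 {A : Type} (P : PB A) : Prop :=
  ∃ (Bx : Set P.Ev) (e1 e2 e3 : P.Ev),
    Bx ∈ P.boxes ∧ e1 ∉ Bx ∧ e2 ∈ Bx ∧ e3 ∈ Bx ∧
    P.le e2 e1 ∧ ¬ P.le e3 e1

/-- A set of events is non-trivial if it is neither empty nor everything. -/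
def NonTrivial {A : Type} (P : PB A) (S : Set P.Ev) : Prop :=
  S ≠ ∅ ∧ S ≠ Set.univ

/-- A set of events is nested if every box is contained in it or disjoint from it. -/
def Nested {A : Type} (P : PB A) (S : Set P.Ev) : Prop :=
  ∀ B ∈ P.boxes, B ⊆ S ∨ B ∩ S = ∅

/-- A set of events is prefix if every event in it is below every event outside. -/
def IsPrefix {A : Type} (P : PB A) (S : Set P.Ev) : Prop :=
  ∀ e ∈ S, ∀ f ∉ S, P.le e f

/-- A set of events is isolated if its events are incomparable with outside events. -/
def Isolated {A : Type} (P : PB A) (S : Set P.Ev) : Prop :=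
  ∀ e ∈ S, ∀ f ∉ S, ¬ P.le e f ∧ ¬ P.le f e
/-- Series–parallel terms. -/
inductive Term (A : Type) : Type
  | one : Term A
  | atom (a : A) : Term A
  | seq (s t : Term A) : Term A
  | par (s t : Term A) : Term A
  | box (s : Term A) : Term A

/-- Interpretation of terms as posets with boxes. -/
def semT {A : Type} : Term A → PB A
  | .one => onePB A
  | .atom a => atomPB a
  | .seq s t => seqPB (semT s) (semT t)
  | .par s t => parPB (semT s) (semT t)
  | .box s => boxPB (semT s)

/-- Derivability in the equational theory of bimonoids with boxes. -/
inductive BimEq {A : Type} : Term A → Term A → Prop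
  | seq_assoc (s t u : Term A) : BimEq (.seq s (.seq t u)) (.seq (.seq s t) u)
  | par_assoc (s t u : Term A) : BimEq (.par s (.par t u)) (.par (.par s t) u)
  | par_comm (s t : Term A) : BimEq (.par s t) (.par t s)
  | seq_unit_l (s : Term A) : BimEq (.seq .one s) s
  | seq_unit_r (s : Term A) : BimEq (.seq s .one) s
  | par_unit (s : Term A) : BimEq (.par .one s) s
  | box_box (s : Term A) : BimEq (.box (.box s)) (.box s)
  | box_one : BimEq (.box .one) .one
  | refl (s : Term A) : BimEq s s
  | symm {s t : Term A} : BimEq s t → BimEq t s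
  | trans {s t u : Term A} : BimEq s t → BimEq t u → BimEq s u
  | seq_congr {s s' t t' : Term A} : BimEq s s' → BimEq t t' → BimEq (.seq s t) (.seq s' t')
  | par_congr {s s' t t' : Term A} : BimEq s s' → BimEq t t' → BimEq (.par s t) (.par s' t')
  | box_congr {s s' : Term A} : BimEq s s' → BimEq (.box s) (.box s')

/-- Derivability in the inequational theory of concurrent monoids with boxes:
bimonoid axioms (in both directions) together with exchange and box elimination. -/
inductive CMLe {A : Type} : Term A → Term A → Prop
  | of_eq {s t : Term A} : BimEq s t → CMLe s t
  | exchange (s t u v : Term A) :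
      CMLe (.seq (.par s t) (.par u v)) (.par (.seq s u) (.seq t v))
  | box_le (s : Term A) : CMLe (.box s) s
  | refl (s : Term A) : CMLe s s
  | trans {s t u : Term A} : CMLe s t → CMLe t u → CMLe s u
  | seq_congr {s s' t t' : Term A} : CMLe s s' → CMLe t t' → CMLe (.seq s t) (.seq s' t')
  | par_congr {s s' t t' : Term A} : CMLe s s' → CMLe t t' → CMLe (.par s t) (.par s' t')
  | box_congr {s s' : Term A} : CMLe s s' → CMLe (.box s) (.box s')
/-- Formulas of pomset logic. -/
inductive Formula (A : Type) : Type
  | emp : Formula A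
  | atom (a : A) : Formula A
  | or (φ ψ : Formula A) : Formula A
  | and (φ ψ : Formula A) : Formula A
  | seqF (φ ψ : Formula A) : Formula A
  | parF (φ ψ : Formula A) : Formula A
  | boxF (φ : Formula A) : Formula A
  | dia (φ : Formula A) : Formula A
  | neg (φ : Formula A) : Formula A

/-- `Q` is a sub-poset of `P` : it is isomorphic to a restriction of `P`. -/
def SubPoset {A : Type} (Q P : PB A) : Prop :=
  ∃ S : Set P.Ev, Iso Q (restrictPB P S)

/-- Satisfaction relation, parametrized by a relation `R` on posets with boxes. -/
def sat {A : Type} (R : PB A → PB A → Prop) : Formula A → PB A → Prop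
  | .emp, P => R P (onePB A)
  | .atom a, P => R P (atomPB a)
  | .or φ ψ, P => sat R φ P ∨ sat R ψ P
  | .and φ ψ, P => sat R φ P ∧ sat R ψ P
  | .seqF φ ψ, P => ∃ P1 P2, R P (seqPB P1 P2) ∧ sat R φ P1 ∧ sat R ψ P2
  | .parF φ ψ, P => ∃ P1 P2, R P (parPB P1 P2) ∧ sat R φ P1 ∧ sat R ψ P2
  | .boxF φ, P => ∃ Q, R P (boxPB Q) ∧ sat R φ Q
  | .dia φ, P => ∃ P' Q, R P P' ∧ SubPoset Q P' ∧ sat R φ Q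
  | .neg φ, P => ¬ sat R φ P

/-- The formula associated with a series–parallel term. -/
def formOf {A : Type} : Term A → Formula A
  | .one => .emp
  | .atom a => .atom a
  | .seq s t => .seqF (formOf s) (formOf t)
  | .par s t => .parF (formOf s) (formOf t)
  | .box s => .boxF (formOf s)

section Aux

variable {A : Type}

def Hom.idHom (P : PB A) : Hom P P where
  toFun := id
  bij := Function.bijective_id
  lab_eq := fun _ => rfl
  mono := fun _ _ h => h
  box_pres := fun B hB => by simpa using hB

def Hom.comp {P Q R : PB A} (ψ : Hom Q R) (φ : Hom P Q) : Hom P R where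
  toFun := ψ.toFun ∘ φ.toFun
  bij := ψ.bij.comp φ.bij
  lab_eq := fun e => by simp [ψ.lab_eq, φ.lab_eq]
  mono := fun e f h => ψ.mono _ _ (φ.mono _ _ h)
  box_pres := fun B hB => by
    rw [Set.image_comp]; exact ψ.box_pres _ (φ.box_pres _ hB)

theorem Iso.refl (P : PB A) : Iso P P :=
  ⟨Hom.idHom P, fun _ _ h => h, fun B hB => by simpa [Hom.idHom] using hB⟩

theorem Iso.trans {P Q R : PB A} (h1 : Iso P Q) (h2 : Iso Q R) : Iso P R := by
  obtain ⟨φ, hφo, hφb⟩ := h1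
  obtain ⟨ψ, hψo, hψb⟩ := h2
  refine ⟨ψ.comp φ, fun e f h => hφo _ _ (hψo _ _ h), fun B hB => ?_⟩
  have himg : (ψ.comp φ).toFun '' B = ψ.toFun '' (φ.toFun '' B) :=
    Set.image_comp ψ.toFun φ.toFun B
  rw [himg] at hB
  exact hφb _ (hψb _ hB)

/-- Congruence homomorphism for sequential composition. -/
def seqHom {P P' Q Q' : PB A} (φ : Hom P P') (ψ : Hom Q Q') :
    Hom (seqPB P Q) (seqPB P' Q') where
  toFun := Sum.map φ.toFun ψ.toFun
  bij := ⟨φ.bij.1.sumMap ψ.bij.1, φ.bij.2.sumMap ψ.bij.2⟩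
  lab_eq := fun e => by cases e <;> simp [seqPB, φ.lab_eq, ψ.lab_eq]
  mono := fun e f h => by
    cases e <;> cases f <;> simp_all only [seqPB, seqLE, Sum.map] <;>
      first
        | exact φ.mono _ _ h
        | exact ψ.mono _ _ h
        | trivial
  box_pres := fun B hB => by
    rcases hB with ⟨C, hC, rfl⟩ | ⟨C, hC, rfl⟩
    · exact Or.inl ⟨φ.toFun '' C, φ.box_pres C hC, by
        exact (Set.image_image _ _ _).trans (Set.image_image (Sum.map φ.toFun ψ.toFun) Sum.inl C).symm⟩
    · exact Or.inr ⟨ψ.toFun '' C, ψ.box_pres C hC, by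
        exact (Set.image_image _ _ _).trans (Set.image_image (Sum.map φ.toFun ψ.toFun) Sum.inr C).symm⟩

/-- Congruence homomorphism for parallel composition. -/
def parHom {P P' Q Q' : PB A} (φ : Hom P P') (ψ : Hom Q Q') :
    Hom (parPB P Q) (parPB P' Q') where
  toFun := Sum.map φ.toFun ψ.toFun
  bij := ⟨φ.bij.1.sumMap ψ.bij.1, φ.bij.2.sumMap ψ.bij.2⟩
  lab_eq := fun e => by cases e <;> simp [parPB, φ.lab_eq, ψ.lab_eq]
  mono := fun e f h => by
    cases e <;> cases f <;> simp_all only [parPB, parLE, Sum.map] <;>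
      first
        | exact φ.mono _ _ h
        | exact ψ.mono _ _ h
        | trivial
  box_pres := (seqHom φ ψ).box_pres

/-- Congruence homomorphism for boxing. -/
def boxHom {P P' : PB A} (φ : Hom P P') : Hom (boxPB P) (boxPB P') where
  toFun := φ.toFun
  bij := φ.bij
  lab_eq := φ.lab_eq
  mono := φ.mono
  box_pres := fun B hB => by
    rcases hB with hB | ⟨rfl, hne⟩
    · exact Or.inl (φ.box_pres B hB)
    · refine Or.inr ⟨?_, hne.image _⟩
      refine Set.image_univ.trans ?_
      exact Set.range_eq_univ.mpr φ.bij.2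

theorem sumMap_ordRefl_seq {P P' Q Q' : PB A} (φ : Hom P P') (ψ : Hom Q Q')
    (hφ : φ.OrdRefl) (hψ : ψ.OrdRefl) : (seqHom φ ψ).OrdRefl := by
  intro e f h
  cases e <;> cases f <;> simp_all only [seqHom, seqPB, seqLE, Sum.map] <;>
    first
      | exact hφ _ _ h
      | exact hψ _ _ h
      | trivial

theorem sumMap_ordRefl_par {P P' Q Q' : PB A} (φ : Hom P P') (ψ : Hom Q Q')
    (hφ : φ.OrdRefl) (hψ : ψ.OrdRefl) : (parHom φ ψ).OrdRefl := by
  intro e f h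
  cases e <;> cases f <;> simp_all only [parHom, parPB, parLE, Sum.map] <;>
    first
      | exact hφ _ _ h
      | exact hψ _ _ h
      | trivial

theorem sumMap_boxRefl {P P' Q Q' : PB A} (φ : Hom P P') (ψ : Hom Q Q')
    (hφ : φ.BoxRefl) (hψ : ψ.BoxRefl) :
    ∀ B : Set ((seqPB P Q).Ev), (Sum.map φ.toFun ψ.toFun) '' B ∈ (seqPB P' Q').boxes →
      B ∈ (seqPB P Q).boxes := by
  intro B hB
  rcases hB with ⟨C, hC, hEq⟩ | ⟨C, hC, hEq⟩
  · -- all elements of B are inl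
    have hsub : B ⊆ Set.range Sum.inl := by
      rintro (p | q) hx
      · exact ⟨p, rfl⟩
      · exfalso
        have : Sum.map φ.toFun ψ.toFun (Sum.inr q) ∈ Sum.inl '' C := by
          rw [hEq]; exact ⟨_, hx, rfl⟩
        rcases this with ⟨c, _, hc⟩
        simp [Sum.map] at hc
    have hBeq : B = Sum.inl '' (Sum.inl ⁻¹' B) := by
      apply Set.Subset.antisymm
      · intro x hx
        rcases hsub hx with ⟨p, rfl⟩
        exact ⟨p, hx, rfl⟩
      · rintro x ⟨p, hp, rfl⟩; exact hp
    have himg : (Sum.inl '' (φ.toFun '' (Sum.inl ⁻¹' B)) : Set (P'.Ev ⊕ Q'.Ev)) = Sum.inl '' C := by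
      rw [hEq]; conv_rhs => rw [hBeq]
      rw [Set.image_image, Set.image_image]; rfl
    have hCC : φ.toFun '' (Sum.inl ⁻¹' B) = C :=
      (Set.image_eq_image Sum.inl_injective).mp himg
    exact Or.inl ⟨_, hφ _ (hCC ▸ hC), hBeq.symm⟩
  · have hsub : B ⊆ Set.range Sum.inr := by
      rintro (p | q) hx
      · exfalso
        have : Sum.map φ.toFun ψ.toFun (Sum.inl p) ∈ Sum.inr '' C := by
          rw [hEq]; exact ⟨_, hx, rfl⟩
        rcases this with ⟨c, _, hc⟩
        simp [Sum.map] at hc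
      · exact ⟨q, rfl⟩
    have hBeq : B = Sum.inr '' (Sum.inr ⁻¹' B) := by
      apply Set.Subset.antisymm
      · intro x hx
        rcases hsub hx with ⟨q, rfl⟩
        exact ⟨q, hx, rfl⟩
      · rintro x ⟨q, hq, rfl⟩; exact hq
    have himg : (Sum.inr '' (ψ.toFun '' (Sum.inr ⁻¹' B)) : Set (P'.Ev ⊕ Q'.Ev)) = Sum.inr '' C := by
      rw [hEq]; conv_rhs => rw [hBeq]
      rw [Set.image_image, Set.image_image]; rfl
    have hCC : ψ.toFun '' (Sum.inr ⁻¹' B) = C :=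
      (Set.image_eq_image Sum.inr_injective).mp himg
    exact Or.inr ⟨_, hψ _ (hCC ▸ hC), hBeq.symm⟩

theorem boxHom_boxRefl {P P' : PB A} (φ : Hom P P') (hφ : φ.BoxRefl) :
    (boxHom φ).BoxRefl := by
  intro B hB
  rcases hB with hB | ⟨hU, hne⟩
  · exact Or.inl (hφ B hB)
  all_goals change φ.toFun '' B = Set.univ at hU
  · refine Or.inr ⟨?_, ?_⟩
    · ext x
      refine (iff_true_right trivial).mpr ?_
      have : φ.toFun x ∈ φ.toFun '' B := by rw [hU]; trivial
      rcases this with ⟨y, hy, hxy⟩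
      rwa [← φ.bij.1 hxy]
    · rcases hne with ⟨x, hx⟩
      rcases hx with ⟨y, hy, _⟩
      exact ⟨y, hy⟩

theorem Iso.seq_congr {P P' Q Q' : PB A} (h1 : Iso P P') (h2 : Iso Q Q') :
    Iso (seqPB P Q) (seqPB P' Q') := by
  obtain ⟨φ, hφo, hφb⟩ := h1
  obtain ⟨ψ, hψo, hψb⟩ := h2
  exact ⟨seqHom φ ψ, sumMap_ordRefl_seq φ ψ hφo hψo, sumMap_boxRefl φ ψ hφb hψb⟩

theorem Iso.par_congr {P P' Q Q' : PB A} (h1 : Iso P P') (h2 : Iso Q Q') :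
    Iso (parPB P Q) (parPB P' Q') := by
  obtain ⟨φ, hφo, hφb⟩ := h1
  obtain ⟨ψ, hψo, hψb⟩ := h2
  exact ⟨parHom φ ψ, sumMap_ordRefl_par φ ψ hφo hψo, sumMap_boxRefl φ ψ hφb hψb⟩

theorem Iso.box_congr {P P' : PB A} (h : Iso P P') : Iso (boxPB P) (boxPB P') := by
  obtain ⟨φ, hφo, hφb⟩ := h
  exact ⟨boxHom φ, hφo, boxHom_boxRefl φ hφb⟩

/-- A relation suitable for the term-to-formula correspondence. -/
structure GoodRel (A : Type) (R : PB A → PB A → Prop) : Prop where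
  refl : ∀ P, R P P
  trans : ∀ {P Q S : PB A}, R P Q → R Q S → R P S
  seq : ∀ {P P' Q Q' : PB A}, R P P' → R Q Q' → R (seqPB P Q) (seqPB P' Q')
  par : ∀ {P P' Q Q' : PB A}, R P P' → R Q Q' → R (parPB P Q) (parPB P' Q')
  box : ∀ {P P' : PB A}, R P P' → R (boxPB P) (boxPB P')

theorem sat_formOf {R : PB A → PB A → Prop} (h : GoodRel A R) :
    ∀ (s : Term A) (P : PB A), sat R (formOf s) P ↔ R P (semT s) := by
  intro s
  induction s with
  | one => intro P; exact Iff.rfl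
  | atom a => intro P; exact Iff.rfl
  | seq s t ihs iht =>
    intro P
    constructor
    · rintro ⟨P1, P2, hP, h1, h2⟩
      exact h.trans hP (h.seq ((ihs P1).mp h1) ((iht P2).mp h2))
    · intro hP
      exact ⟨semT s, semT t, hP, (ihs _).mpr (h.refl _), (iht _).mpr (h.refl _)⟩
  | par s t ihs iht =>
    intro P
    constructor
    · rintro ⟨P1, P2, hP, h1, h2⟩
      exact h.trans hP (h.par ((ihs P1).mp h1) ((iht P2).mp h2))
    · intro hP
      exact ⟨semT s, semT t, hP, (ihs _).mpr (h.refl _), (iht _).mpr (h.refl _)⟩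
  | box s ih =>
    intro P
    constructor
    · rintro ⟨Q, hP, hQ⟩
      exact h.trans hP (h.box ((ih Q).mp hQ))
    · intro hP
      exact ⟨semT s, hP, (ih _).mpr (h.refl _)⟩

theorem goodIso : GoodRel A (Iso : PB A → PB A → Prop) where
  refl := Iso.refl
  trans := Iso.trans
  seq := Iso.seq_congr
  par := Iso.par_congr
  box := Iso.box_congr

theorem goodSub : GoodRel A (Subsume : PB A → PB A → Prop) where
  refl := fun P => ⟨Hom.idHom P⟩
  trans := fun ⟨φ⟩ ⟨ψ⟩ => ⟨φ.comp ψ⟩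
  seq := fun ⟨φ⟩ ⟨ψ⟩ => ⟨seqHom φ ψ⟩
  par := fun ⟨φ⟩ ⟨ψ⟩ => ⟨parHom φ ψ⟩
  box := fun ⟨φ⟩ => ⟨boxHom φ⟩

theorem goodSub' : GoodRel A (fun X Y => Subsume Y X : PB A → PB A → Prop) where
  refl := fun P => ⟨Hom.idHom P⟩
  trans := fun ⟨φ⟩ ⟨ψ⟩ => ⟨ψ.comp φ⟩
  seq := fun ⟨φ⟩ ⟨ψ⟩ => ⟨seqHom φ ψ⟩
  par := fun ⟨φ⟩ ⟨ψ⟩ => ⟨parHom φ ψ⟩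
  box := fun ⟨φ⟩ => ⟨boxHom φ⟩

end Aux

/-- For a series–parallel term `s` and poset with boxes `P` : `P` satisfies
`φ(s)` under the isomorphism semantics iff `P ≅ ⟦s⟧`; under the upward semantics
iff `P ⊒ ⟦s⟧`; under the downward semantics iff `P ⊑ ⟦s⟧`. -/
theorem term_to_formula (A : Type) (s : Term A) (P : PB A) :
    (sat Iso (formOf s) P ↔ Iso P (semT s)) ∧
    (sat (fun X Y => Subsume Y X) (formOf s) P ↔ Subsume (semT s) P) ∧
    (sat Subsume (formOf s) P ↔ Subsume P (semT s)) := by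
  exact ⟨sat_formOf goodIso s P, sat_formOf goodSub' s P, sat_formOf goodSub s P⟩
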